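/- arXiv:2407.07282 — 4 statements merged into one kernel-verified Lean document; each statement's English description precedes it below -/
import Mathlib

section
/- For two p×n complex matrices A and B and any nonnegative integers i, j, the singular values satisfy s_{i+j+1}(A + B) ≤ s_{i+1}(A) + s_{j+1}(B). -/
open scoped BigOperators InnerProductSpace ComplexConjugate Matrix

/-- The `k`-th largest value (1-indexed) of a finite family of reals, `0` if `k` is out of range. -/
noncomputable def kthLargest {m : ℕ} (v : Fin m → ℝ) (k : ℕ) : ℝ :=
  sSup {t : ℝ | k ≤ (Finset.univ.filter (fun i => t ≤ v i)).card}

/-- The `k`-th largest singular value (1-indexed) of a complex matrix, `0` beyond the rank range. -/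
noncomputable def sv {m n : ℕ} (M : Matrix (Fin m) (Fin n) ℂ) (k : ℕ) : ℝ :=
  Real.sqrt (kthLargest (Matrix.isHermitian_conjTranspose_mul_self M).eigenvalues k)

/-- The `k`-th largest singular value (1-indexed) of a real matrix. -/
noncomputable def svR {m n : ℕ} (M : Matrix (Fin m) (Fin n) ℝ) (k : ℕ) : ℝ :=
  Real.sqrt (kthLargest (Matrix.isHermitian_conjTranspose_mul_self M).eigenvalues k)

open Classical in
/-- The `k`-th largest eigenvalue (1-indexed) of a Hermitian matrix (junk value `0` otherwise). -/
noncomputable def eigH {n : ℕ} {𝕜 : Type*} [RCLike 𝕜] (M : Matrix (Fin n) (Fin n) 𝕜) (k : ℕ) : ℝ :=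
  if h : M.IsHermitian then kthLargest h.eigenvalues k else 0

lemma kth_bddAbove {m k : ℕ} (v : Fin m → ℝ) (hk : 1 ≤ k) :
    BddAbove {t : ℝ | k ≤ (Finset.univ.filter (fun i => t ≤ v i)).card} := by
  rcases Nat.eq_zero_or_pos m with hm | hm
  · have : {t : ℝ | k ≤ (Finset.univ.filter (fun i => t ≤ v i)).card} = ∅ := by
      apply Set.eq_empty_of_forall_notMem
      intro t ht
      simp only [Set.mem_setOf_eq] at ht
      have h1 : (Finset.univ.filter (fun i => t ≤ v i)).card ≤ m := by
        simpa using Finset.card_filter_le Finset.univ (fun i => t ≤ v i)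
      omega
    rw [this]; exact bddAbove_empty
  · have hne : (Finset.univ : Finset (Fin m)).Nonempty := ⟨⟨0, hm⟩, Finset.mem_univ _⟩
    refine ⟨Finset.univ.sup' hne v, ?_⟩
    intro t ht
    obtain ⟨i, hi⟩ := Finset.card_pos.mp (lt_of_lt_of_le hk ht)
    rw [Finset.mem_filter] at hi
    exact le_trans hi.2 (Finset.le_sup' v (Finset.mem_univ i))

lemma kthLargest_mem {m k : ℕ} (v : Fin m → ℝ) (hk1 : 1 ≤ k) (hk : k ≤ m) :
    k ≤ (Finset.univ.filter (fun i => kthLargest v k ≤ v i)).card := by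
  have hm : 0 < m := lt_of_lt_of_le hk1 hk
  have hne0 : (Finset.univ : Finset (Fin m)).Nonempty := ⟨⟨0, hm⟩, Finset.mem_univ _⟩
  set s := {t : ℝ | k ≤ (Finset.univ.filter (fun i => t ≤ v i)).card} with hs
  have hsne : s.Nonempty := by
    refine ⟨Finset.univ.inf' hne0 v, ?_⟩
    have : Finset.univ.filter (fun i => Finset.univ.inf' hne0 v ≤ v i) = Finset.univ := by
      apply Finset.filter_true_of_mem
      intro i _
      exact Finset.inf'_le v (Finset.mem_univ i)
    show k ≤ _
    rw [this, Finset.card_univ, Fintype.card_fin]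
    exact hk
  set lam := kthLargest v k with hlam
  by_cases hF : (Finset.univ.filter (fun i => v i < lam)).Nonempty
  · have ht1 : (Finset.univ.filter (fun i => v i < lam)).sup' hF v < lam := by
      rw [Finset.sup'_lt_iff]
      intro i hi
      exact (Finset.mem_filter.mp hi).2
    have hlameq : lam = sSup s := rfl
    have ht2 := lt_of_lt_of_le ht1 (le_of_eq hlameq)
    obtain ⟨t, hts, htt⟩ := exists_lt_of_lt_csSup hsne ht2
    have hts' : k ≤ (Finset.univ.filter (fun i => t ≤ v i)).card := hts
    refine le_trans hts' (Finset.card_le_card ?_)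
    intro i hi
    rw [Finset.mem_filter] at hi ⊢
    refine ⟨Finset.mem_univ _, ?_⟩
    by_contra hvi
    push_neg at hvi
    have : v i ≤ (Finset.univ.filter (fun i => v i < lam)).sup' hF v :=
      Finset.le_sup' v (Finset.mem_filter.mpr ⟨Finset.mem_univ _, hvi⟩)
    linarith [hi.2]
  · have : Finset.univ.filter (fun i => lam ≤ v i) = Finset.univ := by
      apply Finset.filter_true_of_mem
      intro i _
      by_contra h
      push_neg at h
      exact hF ⟨i, Finset.mem_filter.mpr ⟨Finset.mem_univ _, h⟩⟩
    simp only [this, Finset.card_univ, Fintype.card_fin]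
    exact hk

lemma kthLargest_card_lt {m k : ℕ} (v : Fin m → ℝ) (hk1 : 1 ≤ k) :
    (Finset.univ.filter (fun i => kthLargest v k < v i)).card < k := by
  by_contra h
  push_neg at h
  set lam := kthLargest v k with hlam
  set F := Finset.univ.filter (fun i => lam < v i) with hFdef
  have hF : F.Nonempty := Finset.card_pos.mp (lt_of_lt_of_le hk1 h)
  set t := F.inf' hF v with htdef
  have hlt : lam < t := by
    rw [htdef, Finset.lt_inf'_iff]
    intro i hi
    exact (Finset.mem_filter.mp hi).2
  have hts : t ∈ {t : ℝ | k ≤ (Finset.univ.filter (fun i => t ≤ v i)).card} := by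
    refine le_trans h (Finset.card_le_card ?_)
    intro i hi
    rw [Finset.mem_filter]
    exact ⟨Finset.mem_univ _, Finset.inf'_le v hi⟩
  have h2 := le_csSup (kth_bddAbove v hk1) hts
  have h3 : lam = sSup {t : ℝ | k ≤ (Finset.univ.filter (fun i => t ≤ v i)).card} := rfl
  rw [← h3] at h2
  linarith

lemma eigen_apply {n : ℕ} {H : Matrix (Fin n) (Fin n) ℂ} (hH : H.IsHermitian) (i : Fin n) :
    Matrix.toEuclideanLin H (hH.eigenvectorBasis i)
      = (hH.eigenvalues i : ℂ) • hH.eigenvectorBasis i := by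
  have h := hH.mulVec_eigenvectorBasis i
  rw [Matrix.toEuclideanLin_apply]
  have : (WithLp.equiv 2 (Fin n → ℂ)) (hH.eigenvectorBasis i) = ⇑(hH.eigenvectorBasis i) := rfl
  rw [h]
  ext j
  simp [Complex.real_smul]

lemma norm_sq_repr {n : ℕ} (b : OrthonormalBasis (Fin n) ℂ (EuclideanSpace ℂ (Fin n)))
    (x : EuclideanSpace ℂ (Fin n)) : ‖x‖ ^ 2 = ∑ i, ‖b.repr x i‖ ^ 2 := by
  rw [← b.repr.norm_map x, EuclideanSpace.norm_eq, Real.sq_sqrt]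
  positivity

lemma quad_repr {n : ℕ} {H : Matrix (Fin n) (Fin n) ℂ} (hH : H.IsHermitian)
    (x : EuclideanSpace ℂ (Fin n)) :
    (⟪x, Matrix.toEuclideanLin H x⟫_ℂ).re
      = ∑ i, hH.eigenvalues i * ‖hH.eigenvectorBasis.repr x i‖ ^ 2 := by
  set b := hH.eigenvectorBasis with hb
  have hx : Matrix.toEuclideanLin H x
      = ∑ i, (b.repr x i * (hH.eigenvalues i : ℂ)) • b i := by
    conv_lhs => rw [← b.sum_repr x, map_sum]
    refine Finset.sum_congr rfl fun i _ => ?_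
    rw [map_smul, eigen_apply, smul_smul]
  rw [hx, inner_sum]
  rw [Complex.re_sum]
  refine Finset.sum_congr rfl fun i _ => ?_
  rw [inner_smul_right]
  have hxbi : ⟪x, b i⟫_ℂ = conj (b.repr x i) := by
    rw [b.repr_apply_apply]
    exact (inner_conj_symm _ _).symm
  rw [hxbi]
  set c := b.repr x i
  have : c * (hH.eigenvalues i : ℂ) * conj c = (hH.eigenvalues i : ℂ) * Complex.normSq c := by
    rw [mul_comm c, mul_assoc, Complex.mul_conj]
  rw [this, ← Complex.ofReal_mul, Complex.ofReal_re, Complex.sq_norm]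

lemma repr_eq_zero_of_mem_span {n : ℕ} (b : OrthonormalBasis (Fin n) ℂ (EuclideanSpace ℂ (Fin n)))
    (I : Finset (Fin n)) (x : EuclideanSpace ℂ (Fin n))
    (hx : x ∈ Submodule.span ℂ (b '' ↑I)) {i : Fin n} (hi : i ∉ I) : b.repr x i = 0 := by
  have hle : Submodule.span ℂ (b '' ↑I) ≤ LinearMap.ker ((innerSL ℂ (b i)).toLinearMap) := by
    rw [Submodule.span_le]
    rintro v ⟨j, hj, rfl⟩
    have hji : i ≠ j := fun h => hi (h ▸ hj)
    simpa [LinearMap.mem_ker] using b.orthonormal.2 hji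
  have h0 := hle hx
  rw [LinearMap.mem_ker] at h0
  rw [b.repr_apply_apply]
  exact h0

lemma finrank_span_eigen {n : ℕ} (b : OrthonormalBasis (Fin n) ℂ (EuclideanSpace ℂ (Fin n)))
    (I : Finset (Fin n)) :
    Module.finrank ℂ (Submodule.span ℂ (b '' ↑I)) = I.card := by
  have hli : LinearIndependent ℂ (fun i : I => b i) :=
    (b.orthonormal.linearIndependent).comp _ Subtype.coe_injective
  have h := finrank_span_eq_card hli
  have hr : Set.range (fun i : I => b i) = b '' ↑I := by
    ext y
    constructor
    · rintro ⟨⟨i2, hi2⟩, rfl⟩; exact ⟨i2, hi2, rfl⟩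
    · rintro ⟨i2, hi2, rfl⟩; exact ⟨⟨i2, hi2⟩, rfl⟩
  rw [hr] at h
  simpa [Fintype.card_coe] using h

lemma quad_self {p n : ℕ} (M : Matrix (Fin p) (Fin n) ℂ) (x : EuclideanSpace ℂ (Fin n)) :
    (⟪x, Matrix.toEuclideanLin (Mᴴ * M) x⟫_ℂ).re = ‖Matrix.toEuclideanLin M x‖ ^ 2 := by
  have h1 : Matrix.toEuclideanLin (Mᴴ * M) x
      = Matrix.toEuclideanLin Mᴴ (Matrix.toEuclideanLin M x) := by
    simp [Matrix.toEuclideanLin_apply, Matrix.mulVec_mulVec]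
  rw [h1, Matrix.toEuclideanLin_conjTranspose_eq_adjoint, LinearMap.adjoint_inner_right]
  rw [← RCLike.re_to_complex, inner_self_eq_norm_sq]


set_option maxHeartbeats 1000000 in
/-- Ky Fan type inequality `s_{i+j+1}(A+B) ≤ s_{i+1}(A) + s_{j+1}(B)`. -/
theorem stmt2 {p n : ℕ} (A B : Matrix (Fin p) (Fin n) ℂ) (i j : ℕ) :
    sv (A + B) (i + j + 1) ≤ sv A (i + 1) + sv B (j + 1) := by
  by_cases hk : i + j + 1 ≤ n
  case neg =>
    have h0 : sv (A + B) (i + j + 1) = 0 := by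
      unfold sv kthLargest
      have he : {t : ℝ | i + j + 1 ≤ (Finset.univ.filter
          (fun l => t ≤ (Matrix.isHermitian_conjTranspose_mul_self (A + B)).eigenvalues l)).card}
          = ∅ := by
        apply Set.eq_empty_of_forall_notMem
        intro t ht
        simp only [Set.mem_setOf_eq] at ht
        have h1 := Finset.card_filter_le Finset.univ
          (fun l => t ≤ (Matrix.isHermitian_conjTranspose_mul_self (A + B)).eigenvalues l)
        simp only [Finset.card_univ, Fintype.card_fin] at h1
        omega
      rw [he, Real.sSup_empty, Real.sqrt_zero]
    rw [h0]
    unfold sv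
    positivity
  case pos =>
    unfold sv
    set hH := Matrix.isHermitian_conjTranspose_mul_self (A + B) with hHd
    set hhA := Matrix.isHermitian_conjTranspose_mul_self A with hhAd
    set hhB := Matrix.isHermitian_conjTranspose_mul_self B with hhBd
    set lam := kthLargest hH.eigenvalues (i + j + 1) with hlamd
    set lamA := kthLargest hhA.eigenvalues (i + 1) with hlamAd
    set lamB := kthLargest hhB.eigenvalues (j + 1) with hlamBd
    set b := hH.eigenvectorBasis with hbd
    set bA := hhA.eigenvectorBasis with hbAd
    set bB := hhB.eigenvectorBasis with hbBd
    set I := Finset.univ.filter (fun l => lam ≤ hH.eigenvalues l) with hId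
    set JA := Finset.univ.filter (fun l => ¬ lamA < hhA.eigenvalues l) with hJAd
    set JB := Finset.univ.filter (fun l => ¬ lamB < hhB.eigenvalues l) with hJBd
    set S := Submodule.span ℂ (⇑b '' ↑I) with hSd
    set TA := Submodule.span ℂ (⇑bA '' ↑JA) with hTAd
    set TB := Submodule.span ℂ (⇑bB '' ↑JB) with hTBd
    -- dimension bounds
    have hcardI : i + j + 1 ≤ I.card := kthLargest_mem _ (by omega) hk
    have hcardJA : n ≤ JA.card + i := by
      have h1 := kthLargest_card_lt hhA.eigenvalues (Nat.le_add_left 1 i)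
      rw [← hlamAd] at h1
      have h3 := Finset.card_filter_le Finset.univ (fun l => lamA < hhA.eigenvalues l)
      simp only [Finset.card_univ, Fintype.card_fin] at h3
      have hJAcard : JA.card
          = n - (Finset.univ.filter (fun l => lamA < hhA.eigenvalues l)).card := by
        rw [hJAd, Finset.filter_not, Finset.card_sdiff_of_subset (Finset.filter_subset _ _),
          Finset.card_univ, Fintype.card_fin]
      omega
    have hcardJB : n ≤ JB.card + j := by
      have h1 := kthLargest_card_lt hhB.eigenvalues (Nat.le_add_left 1 j)
      rw [← hlamBd] at h1
      have h3 := Finset.card_filter_le Finset.univ (fun l => lamB < hhB.eigenvalues l)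
      simp only [Finset.card_univ, Fintype.card_fin] at h3
      have hJBcard : JB.card
          = n - (Finset.univ.filter (fun l => lamB < hhB.eigenvalues l)).card := by
        rw [hJBd, Finset.filter_not, Finset.card_sdiff_of_subset (Finset.filter_subset _ _),
          Finset.card_univ, Fintype.card_fin]
      omega
    have hdS : i + j + 1 ≤ Module.finrank ℂ S := by
      rw [hSd, finrank_span_eigen]; exact hcardI
    have hdTA : n ≤ Module.finrank ℂ TA + i := by
      rw [hTAd, finrank_span_eigen]; exact hcardJA
    have hdTB : n ≤ Module.finrank ℂ TB + j := by
      rw [hTBd, finrank_span_eigen]; exact hcardJB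
    have hsum1 := Submodule.finrank_sup_add_finrank_inf_eq TA TB
    have hsum2 := Submodule.finrank_sup_add_finrank_inf_eq S (TA ⊓ TB)
    have hle1 : Module.finrank ℂ ↥(TA ⊔ TB) ≤ n := by
      have := Submodule.finrank_le (TA ⊔ TB)
      rwa [finrank_euclideanSpace_fin] at this
    have hle2 : Module.finrank ℂ ↥(S ⊔ (TA ⊓ TB)) ≤ n := by
      have := Submodule.finrank_le (S ⊔ (TA ⊓ TB))
      rwa [finrank_euclideanSpace_fin] at this
    have hW : 0 < Module.finrank ℂ ↥(S ⊓ (TA ⊓ TB)) := by omega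
    have hWbot : S ⊓ (TA ⊓ TB) ≠ ⊥ := by
      intro hbot
      rw [hbot, finrank_bot] at hW
      exact lt_irrefl 0 hW
    obtain ⟨x, hxW, hx0⟩ := Submodule.exists_mem_ne_zero_of_ne_bot hWbot
    have hxS : x ∈ S := hxW.1
    have hxA : x ∈ TA := hxW.2.1
    have hxB : x ∈ TB := hxW.2.2
    have hxnorm : (0 : ℝ) < ‖x‖ := norm_pos_iff.mpr hx0
    -- quadratic form bounds
    have h1 : lam * ‖x‖ ^ 2 ≤ ‖Matrix.toEuclideanLin (A + B) x‖ ^ 2 := by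
      calc lam * ‖x‖ ^ 2 = ∑ l, lam * ‖b.repr x l‖ ^ 2 := by
            rw [norm_sq_repr b x, Finset.mul_sum]
        _ ≤ ∑ l, hH.eigenvalues l * ‖b.repr x l‖ ^ 2 := by
            apply Finset.sum_le_sum
            intro l _
            by_cases hl : l ∈ I
            · exact mul_le_mul_of_nonneg_right ((Finset.mem_filter.mp hl).2) (by positivity)
            · rw [repr_eq_zero_of_mem_span b I x hxS hl]
              simp
        _ = ‖Matrix.toEuclideanLin (A + B) x‖ ^ 2 := by
            rw [← quad_repr hH x, quad_self]
    have h2 : ‖Matrix.toEuclideanLin A x‖ ^ 2 ≤ lamA * ‖x‖ ^ 2 := by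
      calc ‖Matrix.toEuclideanLin A x‖ ^ 2 = ∑ l, hhA.eigenvalues l * ‖bA.repr x l‖ ^ 2 := by
            rw [← quad_repr hhA x, quad_self]
        _ ≤ ∑ l, lamA * ‖bA.repr x l‖ ^ 2 := by
            apply Finset.sum_le_sum
            intro l _
            by_cases hl : l ∈ JA
            · have := (Finset.mem_filter.mp hl).2
              push_neg at this
              exact mul_le_mul_of_nonneg_right this (by positivity)
            · rw [repr_eq_zero_of_mem_span bA JA x hxA hl]
              simp
        _ = lamA * ‖x‖ ^ 2 := by rw [norm_sq_repr bA x, Finset.mul_sum]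
    have h3 : ‖Matrix.toEuclideanLin B x‖ ^ 2 ≤ lamB * ‖x‖ ^ 2 := by
      calc ‖Matrix.toEuclideanLin B x‖ ^ 2 = ∑ l, hhB.eigenvalues l * ‖bB.repr x l‖ ^ 2 := by
            rw [← quad_repr hhB x, quad_self]
        _ ≤ ∑ l, lamB * ‖bB.repr x l‖ ^ 2 := by
            apply Finset.sum_le_sum
            intro l _
            by_cases hl : l ∈ JB
            · have := (Finset.mem_filter.mp hl).2
              push_neg at this
              exact mul_le_mul_of_nonneg_right this (by positivity)
            · rw [repr_eq_zero_of_mem_span bB JB x hxB hl]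
              simp
        _ = lamB * ‖x‖ ^ 2 := by rw [norm_sq_repr bB x, Finset.mul_sum]
    have hlamA0 : 0 ≤ lamA := by
      have h0' : (0 : ℝ) * ‖x‖ ^ 2 ≤ lamA * ‖x‖ ^ 2 := by
        rw [zero_mul]; exact le_trans (sq_nonneg _) h2
      exact le_of_mul_le_mul_right h0' (pow_pos hxnorm 2)
    have hlamB0 : 0 ≤ lamB := by
      have h0' : (0 : ℝ) * ‖x‖ ^ 2 ≤ lamB * ‖x‖ ^ 2 := by
        rw [zero_mul]; exact le_trans (sq_nonneg _) h3
      exact le_of_mul_le_mul_right h0' (pow_pos hxnorm 2)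
    have hAx : ‖Matrix.toEuclideanLin A x‖ ≤ Real.sqrt lamA * ‖x‖ := by
      have h' : ‖Matrix.toEuclideanLin A x‖ ^ 2 ≤ (Real.sqrt lamA * ‖x‖) ^ 2 := by
        rw [mul_pow, Real.sq_sqrt hlamA0]; exact h2
      calc ‖Matrix.toEuclideanLin A x‖
          = Real.sqrt (‖Matrix.toEuclideanLin A x‖ ^ 2) := (Real.sqrt_sq (norm_nonneg _)).symm
        _ ≤ Real.sqrt ((Real.sqrt lamA * ‖x‖) ^ 2) := Real.sqrt_le_sqrt h'
        _ = Real.sqrt lamA * ‖x‖ := Real.sqrt_sq (by positivity)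
    have hBx : ‖Matrix.toEuclideanLin B x‖ ≤ Real.sqrt lamB * ‖x‖ := by
      have h' : ‖Matrix.toEuclideanLin B x‖ ^ 2 ≤ (Real.sqrt lamB * ‖x‖) ^ 2 := by
        rw [mul_pow, Real.sq_sqrt hlamB0]; exact h3
      calc ‖Matrix.toEuclideanLin B x‖
          = Real.sqrt (‖Matrix.toEuclideanLin B x‖ ^ 2) := (Real.sqrt_sq (norm_nonneg _)).symm
        _ ≤ Real.sqrt ((Real.sqrt lamB * ‖x‖) ^ 2) := Real.sqrt_le_sqrt h'
        _ = Real.sqrt lamB * ‖x‖ := Real.sqrt_sq (by positivity)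
    have hadd : Matrix.toEuclideanLin (A + B) x
        = Matrix.toEuclideanLin A x + Matrix.toEuclideanLin B x := by
      rw [map_add, LinearMap.add_apply]
    have htri : ‖Matrix.toEuclideanLin (A + B) x‖
        ≤ (Real.sqrt lamA + Real.sqrt lamB) * ‖x‖ := by
      rw [hadd]
      calc ‖Matrix.toEuclideanLin A x + Matrix.toEuclideanLin B x‖
          ≤ ‖Matrix.toEuclideanLin A x‖ + ‖Matrix.toEuclideanLin B x‖ := norm_add_le _ _
        _ ≤ Real.sqrt lamA * ‖x‖ + Real.sqrt lamB * ‖x‖ := add_le_add hAx hBx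
        _ = (Real.sqrt lamA + Real.sqrt lamB) * ‖x‖ := by ring
    have hfin : lam ≤ (Real.sqrt lamA + Real.sqrt lamB) ^ 2 := by
      have h4 : ‖Matrix.toEuclideanLin (A + B) x‖ ^ 2
          ≤ ((Real.sqrt lamA + Real.sqrt lamB) * ‖x‖) ^ 2 :=
        pow_le_pow_left₀ (norm_nonneg _) htri 2
      rw [mul_pow] at h4
      have h5 : lam * ‖x‖ ^ 2 ≤ (Real.sqrt lamA + Real.sqrt lamB) ^ 2 * ‖x‖ ^ 2 :=
        le_trans h1 h4
      exact le_of_mul_le_mul_right (by linarith) (pow_pos hxnorm 2)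
    calc Real.sqrt lam ≤ Real.sqrt ((Real.sqrt lamA + Real.sqrt lamB) ^ 2) :=
          Real.sqrt_le_sqrt hfin
      _ = Real.sqrt lamA + Real.sqrt lamB := Real.sqrt_sq (by positivity)
end

section
/- For complex matrices A of size m×n and B of size n×p, and any nonnegative integers i, j, the singular values satisfy s_{i+j+1}(AB) ≤ s_{i+1}(A) · s_{j+1}(B). -/
open scoped BigOperators

open scoped InnerProductSpace
open Matrix

section KthAux

private lemma mem_kset_iff {m : ℕ} {v : Fin m → ℝ} {k : ℕ} {t : ℝ} :
    k ≤ (Finset.univ.filter (fun i => t ≤ v i)).card ↔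
      ∃ s : Finset (Fin m), s.card = k ∧ ∀ i ∈ s, t ≤ v i := by
  constructor
  · intro h
    obtain ⟨s, hs, hcard⟩ := Finset.exists_subset_card_eq h
    exact ⟨s, hcard, fun i hi => (Finset.mem_filter.1 (hs hi)).2⟩
  · rintro ⟨s, hcard, hall⟩
    calc k = s.card := hcard.symm
    _ ≤ _ := Finset.card_le_card (fun i hi => Finset.mem_filter.2 ⟨Finset.mem_univ _, hall i hi⟩)

private noncomputable def kMinOn {m : ℕ} (v : Fin m → ℝ) (s : Finset (Fin m)) : ℝ :=
  if h : s.Nonempty then s.inf' h v else 0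

private lemma powersetCard_nonempty {m k : ℕ} (hkm : k ≤ m) :
    ((Finset.univ : Finset (Fin m)).powersetCard k).Nonempty := by
  obtain ⟨s, _, hcard⟩ := Finset.exists_subset_card_eq
    (show k ≤ (Finset.univ : Finset (Fin m)).card by simpa using hkm)
  exact ⟨s, by simpa [Finset.mem_powersetCard_univ] using hcard⟩

private lemma kset_eq_Iic {m : ℕ} (v : Fin m → ℝ) {k : ℕ} (hk : 1 ≤ k) (hkm : k ≤ m) :
    {t : ℝ | k ≤ (Finset.univ.filter (fun i => t ≤ v i)).card} =
      Set.Iic (((Finset.univ : Finset (Fin m)).powersetCard k).sup'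
        (powersetCard_nonempty hkm) (kMinOn v)) := by
  ext t
  simp only [Set.mem_setOf_eq, Set.mem_Iic, mem_kset_iff,
    Finset.le_sup'_iff (powersetCard_nonempty hkm)]
  constructor
  · rintro ⟨s, hcard, hall⟩
    have hne : s.Nonempty := Finset.card_pos.1 (hcard ▸ hk)
    refine ⟨s, by simpa [Finset.mem_powersetCard_univ] using hcard, ?_⟩
    rw [kMinOn, dif_pos hne]
    exact Finset.le_inf' hne v hall
  · rintro ⟨s, hs, hts⟩
    have hcard : s.card = k := Finset.mem_powersetCard_univ.1 hs
    have hne : s.Nonempty := Finset.card_pos.1 (hcard ▸ hk)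
    rw [kMinOn, dif_pos hne] at hts
    exact ⟨s, hcard, fun i hi => hts.trans (Finset.inf'_le v hi)⟩

private lemma kthLargest_eq_sup' {m : ℕ} (v : Fin m → ℝ) {k : ℕ} (hk : 1 ≤ k) (hkm : k ≤ m) :
    kthLargest v k = ((Finset.univ : Finset (Fin m)).powersetCard k).sup'
      (powersetCard_nonempty hkm) (kMinOn v) := by
  rw [kthLargest, kset_eq_Iic v hk hkm, csSup_Iic]

private lemma kthLargest_attained {m : ℕ} (v : Fin m → ℝ) {k : ℕ} (hk : 1 ≤ k) (hkm : k ≤ m) :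
    ∃ s : Finset (Fin m), s.card = k ∧ ∀ i ∈ s, kthLargest v k ≤ v i := by
  rw [kthLargest_eq_sup' v hk hkm]
  obtain ⟨s, hs, heq⟩ := Finset.exists_mem_eq_sup' (powersetCard_nonempty hkm) (kMinOn v)
  have hcard : s.card = k := Finset.mem_powersetCard_univ.1 hs
  have hne : s.Nonempty := Finset.card_pos.1 (hcard ▸ hk)
  refine ⟨s, hcard, fun i hi => ?_⟩
  rw [heq, kMinOn, dif_pos hne]
  exact Finset.inf'_le v hi

private lemma card_le_filter_kthLargest_le {m : ℕ} (v : Fin m → ℝ) {k : ℕ} (hk : 1 ≤ k)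
    (hkm : k ≤ m) :
    k ≤ (Finset.univ.filter (fun i => kthLargest v k ≤ v i)).card := by
  rw [mem_kset_iff]
  exact kthLargest_attained v hk hkm

private lemma card_filter_lt_kthLargest {m : ℕ} (v : Fin m → ℝ) {k : ℕ} (hk : 1 ≤ k) :
    (Finset.univ.filter (fun i => kthLargest v k < v i)).card < k := by
  rcases le_or_gt k m with hkm | hkm
  · by_contra hcon
    push_neg at hcon
    obtain ⟨s, hs, hcard⟩ := Finset.exists_subset_card_eq hcon
    have hne : s.Nonempty := Finset.card_pos.1 (hcard ▸ hk)
    have h1 : kMinOn v s ≤ kthLargest v k := by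
      rw [kthLargest_eq_sup' v hk hkm]
      exact Finset.le_sup' (kMinOn v) (Finset.mem_powersetCard_univ.2 hcard)
    obtain ⟨i0, hi0, heq⟩ := Finset.exists_mem_eq_inf' hne v
    rw [kMinOn, dif_pos hne, heq] at h1
    exact absurd h1 (not_le.2 (Finset.mem_filter.1 (hs hi0)).2)
  · calc (Finset.univ.filter (fun i => kthLargest v k < v i)).card
        ≤ (Finset.univ : Finset (Fin m)).card := Finset.card_le_card (Finset.filter_subset _ _)
    _ = m := by simp
    _ < k := hkm

private lemma kthLargest_eq_zero {m : ℕ} (v : Fin m → ℝ) {k : ℕ} (hkm : m < k) :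
    kthLargest v k = 0 := by
  have h : {t : ℝ | k ≤ (Finset.univ.filter (fun i => t ≤ v i)).card} = ∅ := by
    ext t
    simp only [Set.mem_setOf_eq, Set.mem_empty_iff_false, iff_false, not_le]
    calc (Finset.univ.filter (fun i => t ≤ v i)).card
        ≤ (Finset.univ : Finset (Fin m)).card := Finset.card_le_card (Finset.filter_subset _ _)
    _ = m := by simp
    _ < k := hkm
  rw [kthLargest, h, Real.sSup_empty]

private lemma kthLargest_nonneg {m : ℕ} {v : Fin m → ℝ} (hv : ∀ i, 0 ≤ v i) {k : ℕ}
    (hk : 1 ≤ k) : 0 ≤ kthLargest v k := by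
  rcases le_or_gt k m with hkm | hkm
  · rw [kthLargest_eq_sup' v hk hkm]
    obtain ⟨s, hs⟩ := powersetCard_nonempty (m := m) hkm
    refine le_trans ?_ (Finset.le_sup' (kMinOn v) hs)
    have hcard : s.card = k := Finset.mem_powersetCard_univ.1 hs
    have hne : s.Nonempty := Finset.card_pos.1 (hcard ▸ hk)
    rw [kMinOn, dif_pos hne]
    exact Finset.le_inf' hne v fun i _ => hv i
  · rw [kthLargest_eq_zero v hkm]

end KthAux

section LinAux

private lemma toEL_eigen {p : ℕ} {H : Matrix (Fin p) (Fin p) ℂ} (hH : H.IsHermitian) (t : Fin p) :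
    Matrix.toEuclideanLin H (hH.eigenvectorBasis t) =
      (hH.eigenvalues t : ℂ) • hH.eigenvectorBasis t := by
  have h := hH.mulVec_eigenvectorBasis t
  rw [Matrix.toEuclideanLin_apply]
  ext i
  have := congrFun h i
  simpa [Complex.real_smul] using this

private lemma parseval {p : ℕ} (b : OrthonormalBasis (Fin p) ℂ (EuclideanSpace ℂ (Fin p)))
    (x : EuclideanSpace ℂ (Fin p)) :
    ∑ t, ‖(inner ℂ (b t) x : ℂ)‖ ^ 2 = ‖x‖ ^ 2 := by
  have h1 : ‖b.repr x‖ = ‖x‖ := b.repr.norm_map x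
  have h2 : ‖b.repr x‖ ^ 2 = ∑ t, ‖b.repr x t‖ ^ 2 := by
    rw [EuclideanSpace.norm_eq]
    rw [Real.sq_sqrt (by positivity)]
  simp only [b.repr_apply_apply] at h2
  rw [← h1, h2]

private lemma rayleigh_sum {p : ℕ} {H : Matrix (Fin p) (Fin p) ℂ} (hH : H.IsHermitian)
    (x : EuclideanSpace ℂ (Fin p)) :
    (inner ℂ x (Matrix.toEuclideanLin H x) : ℂ) =
      ((∑ t, hH.eigenvalues t * ‖(inner ℂ (hH.eigenvectorBasis t) x : ℂ)‖ ^ 2 : ℝ) : ℂ) := by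
  set b := hH.eigenvectorBasis with hb
  have hx : Matrix.toEuclideanLin H x =
      ∑ t, (inner ℂ (b t) x : ℂ) • ((hH.eigenvalues t : ℂ) • b t) := by
    conv_lhs => rw [← b.sum_repr' x, map_sum]
    refine Finset.sum_congr rfl fun t _ => ?_
    rw [_root_.map_smul, toEL_eigen hH t]
  rw [hx, inner_sum]
  push_cast
  refine Finset.sum_congr rfl fun t _ => ?_
  rw [inner_smul_right, inner_smul_right, ← inner_conj_symm x (b t)]
  rw [mul_comm ((hH.eigenvalues t : ℂ)) _, ← mul_assoc, RCLike.mul_conj]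
  exact mul_comm _ _

private lemma toEL_mul {a b c : ℕ} (P : Matrix (Fin a) (Fin b) ℂ) (Q : Matrix (Fin b) (Fin c) ℂ)
    (x : EuclideanSpace ℂ (Fin c)) :
    Matrix.toEuclideanLin (P * Q) x = Matrix.toEuclideanLin P (Matrix.toEuclideanLin Q x) := by
  simp [Matrix.toEuclideanLin_apply, Matrix.mulVec_mulVec]

private lemma normsq_eq {a b : ℕ} (M : Matrix (Fin a) (Fin b) ℂ) (x : EuclideanSpace ℂ (Fin b)) :
    (inner ℂ x (Matrix.toEuclideanLin (Mᴴ * M) x) : ℂ) =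
      ((‖Matrix.toEuclideanLin M x‖ ^ 2 : ℝ) : ℂ) := by
  rw [toEL_mul, Matrix.toEuclideanLin_conjTranspose_eq_adjoint, LinearMap.adjoint_inner_right,
    inner_self_eq_norm_sq_to_K]
  norm_cast

private lemma norm_toEL_le {a b : ℕ} (M : Matrix (Fin a) (Fin b) ℂ) {k : ℕ}
    (x : EuclideanSpace ℂ (Fin b))
    (hx : ∀ t : Fin b, kthLargest (Matrix.isHermitian_conjTranspose_mul_self M).eigenvalues k <
        (Matrix.isHermitian_conjTranspose_mul_self M).eigenvalues t →
        (inner ℂ ((Matrix.isHermitian_conjTranspose_mul_self M).eigenvectorBasis t) x : ℂ) = 0) :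
    ‖Matrix.toEuclideanLin M x‖ ^ 2 ≤
      kthLargest (Matrix.isHermitian_conjTranspose_mul_self M).eigenvalues k * ‖x‖ ^ 2 := by
  set hM := Matrix.isHermitian_conjTranspose_mul_self M
  set lam := kthLargest hM.eigenvalues k with hlam
  have h1 : ‖Matrix.toEuclideanLin M x‖ ^ 2 =
      ∑ t, hM.eigenvalues t * ‖(inner ℂ (hM.eigenvectorBasis t) x : ℂ)‖ ^ 2 := by
    have h := (normsq_eq M x).symm.trans (rayleigh_sum hM x)
    exact_mod_cast h
  rw [h1, ← parseval hM.eigenvectorBasis x, Finset.mul_sum]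
  apply Finset.sum_le_sum
  intro t _
  rcases le_or_gt (hM.eigenvalues t) lam with h | h
  · exact mul_le_mul_of_nonneg_right h (by positivity)
  · rw [hx t h]
    simp

private lemma key_cf {p : ℕ} {H : Matrix (Fin p) (Fin p) ℂ} (hH : H.IsHermitian)
    {ι : Type} [Fintype ι] {k : ℕ} (hι : Fintype.card ι ≤ k)
    (φ : ι → (EuclideanSpace ℂ (Fin p) →ₗ[ℂ] ℂ)) {c : ℝ} (hc : 0 ≤ c)
    (hbound : ∀ x : EuclideanSpace ℂ (Fin p), (∀ r, φ r x = 0) →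
      (inner ℂ x (Matrix.toEuclideanLin H x) : ℂ).re ≤ c * ‖x‖ ^ 2) :
    kthLargest hH.eigenvalues (k + 1) ≤ c := by
  rcases lt_or_ge p (k + 1) with hp | hp
  · rw [kthLargest_eq_zero _ hp]; exact hc
  set μ := hH.eigenvalues with hμ
  set e := hH.eigenvectorBasis with he
  set t0 := kthLargest μ (k + 1) with ht0
  set T : Finset (Fin p) := Finset.univ.filter (fun t => t0 ≤ μ t) with hT
  have hcardT : k + 1 ≤ T.card := card_le_filter_kthLargest_le μ (by omega) hp
  set F : (↥T → ℂ) →ₗ[ℂ] EuclideanSpace ℂ (Fin p) :=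
    { toFun := fun c' => ∑ t : ↥T, c' t • (e t : EuclideanSpace ℂ (Fin p)),
      map_add' := by intro u v; simp [add_smul, Finset.sum_add_distrib],
      map_smul' := by intro r u; simp [smul_smul, Finset.smul_sum] } with hF
  set g : (↥T → ℂ) →ₗ[ℂ] (ι → ℂ) := LinearMap.pi (fun r => (φ r).comp F) with hg
  have hginj : ¬ Function.Injective g := by
    intro hinj
    have h2 := LinearMap.finrank_le_finrank_of_injective hinj
    rw [Module.finrank_pi, Module.finrank_pi] at h2
    rw [Fintype.card_coe] at h2
    omega
  obtain ⟨u, v, huv, hne⟩ := Function.not_injective_iff.1 hginj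
  set c' : ↥T → ℂ := u - v with hc'
  have hc'0 : c' ≠ 0 := sub_ne_zero.2 hne
  have hgc' : g c' = 0 := by rw [hc', map_sub, huv, sub_self]
  set x := F c' with hxdef
  have hinner : ∀ t : Fin p, (inner ℂ (e t) x : ℂ) = if h : t ∈ T then c' ⟨t, h⟩ else 0 := by
    intro t
    have hterm : ∀ s : ↥T, (inner ℂ (e t) (c' s • (e s : EuclideanSpace ℂ (Fin p))) : ℂ)
        = c' s * (if t = (s : Fin p) then 1 else 0) := by
      intro s
      rw [inner_smul_right, orthonormal_iff_ite.1 e.orthonormal t (s : Fin p)]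
    rw [hxdef]
    show (inner ℂ (e t) (∑ s : ↥T, c' s • (e s : EuclideanSpace ℂ (Fin p))) : ℂ) = _
    rw [inner_sum]
    simp only [hterm]
    by_cases h : t ∈ T
    · rw [dif_pos h]
      rw [Finset.sum_eq_single_of_mem (⟨t, h⟩ : ↥T) (Finset.mem_univ _)]
      · simp
      · intro s _ hs
        have hts : ¬ (t = (s : Fin p)) := fun hcontra => hs (Subtype.ext hcontra.symm)
        simp [hts]
    · rw [dif_neg h]
      apply Finset.sum_eq_zero
      intro s _
      have hts : ¬ (t = (s : Fin p)) := fun hcontra => h (hcontra ▸ s.2)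
      simp [hts]
  have hxne : x ≠ 0 := by
    intro h0
    apply hc'0
    funext s
    have h3 := hinner s.val
    rw [dif_pos s.2, h0, inner_zero_right] at h3
    simpa using h3.symm
  have hb1 : t0 * ‖x‖ ^ 2 ≤ (inner ℂ x (Matrix.toEuclideanLin H x) : ℂ).re := by
    have hre : (inner ℂ x (Matrix.toEuclideanLin H x) : ℂ).re =
        ∑ t, μ t * ‖(inner ℂ (e t) x : ℂ)‖ ^ 2 := by
      rw [rayleigh_sum hH x, Complex.ofReal_re]
    rw [hre, ← parseval e x, Finset.mul_sum]
    apply Finset.sum_le_sum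
    intro t _
    by_cases h : t ∈ T
    · exact mul_le_mul_of_nonneg_right (Finset.mem_filter.1 h).2 (by positivity)
    · rw [hinner t, dif_neg h]
      simp
  have hzero : ∀ r, φ r x = 0 := by
    intro r
    have h4 := congrFun hgc' r
    simpa [hg] using h4
  have hx2 : (0 : ℝ) < ‖x‖ ^ 2 := by
    have := norm_pos_iff.2 hxne
    positivity
  exact le_of_mul_le_mul_right (hb1.trans (hbound x hzero)) hx2

end LinAux

/-- `s_{i+j+1}(AB) ≤ s_{i+1}(A)·s_{j+1}(B)`. -/
theorem stmt4 {m n p : ℕ} (A : Matrix (Fin m) (Fin n) ℂ) (B : Matrix (Fin n) (Fin p) ℂ)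
    (i j : ℕ) :
    sv (A * B) (i + j + 1) ≤ sv A (i + 1) * sv B (j + 1) := by
  classical
  set hA' := Matrix.isHermitian_conjTranspose_mul_self A with hhA
  set hB' := Matrix.isHermitian_conjTranspose_mul_self B with hhB
  set hAB := Matrix.isHermitian_conjTranspose_mul_self (A * B) with hhAB
  set lA := kthLargest hA'.eigenvalues (i + 1) with hlA
  set lB := kthLargest hB'.eigenvalues (j + 1) with hlB
  have hlA0 : 0 ≤ lA :=
    kthLargest_nonneg (fun t => Matrix.eigenvalues_conjTranspose_mul_self_nonneg A t) (by omega)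
  have hlB0 : 0 ≤ lB :=
    kthLargest_nonneg (fun t => Matrix.eigenvalues_conjTranspose_mul_self_nonneg B t) (by omega)
  set SA : Finset (Fin n) := Finset.univ.filter (fun t => lA < hA'.eigenvalues t) with hSA
  set SB : Finset (Fin p) := Finset.univ.filter (fun t => lB < hB'.eigenvalues t) with hSB
  have hSAcard : SA.card < i + 1 := card_filter_lt_kthLargest _ (by omega)
  have hSBcard : SB.card < j + 1 := card_filter_lt_kthLargest _ (by omega)
  have hcard : Fintype.card (↥SA ⊕ ↥SB) ≤ i + j := by
    rw [Fintype.card_sum, Fintype.card_coe, Fintype.card_coe]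
    omega
  set φ : (↥SA ⊕ ↥SB) → (EuclideanSpace ℂ (Fin p) →ₗ[ℂ] ℂ) :=
    fun r => match r with
      | Sum.inl s => ((innerSL ℂ (hA'.eigenvectorBasis s)).toLinearMap).comp
          (Matrix.toEuclideanLin B)
      | Sum.inr t => (innerSL ℂ (hB'.eigenvectorBasis t)).toLinearMap
    with hφ
  have hbound : ∀ x : EuclideanSpace ℂ (Fin p), (∀ r, φ r x = 0) →
      (inner ℂ x (Matrix.toEuclideanLin ((A * B)ᴴ * (A * B)) x) : ℂ).re ≤ lA * lB * ‖x‖ ^ 2 := by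
    intro x hx
    have hnormB : ‖Matrix.toEuclideanLin B x‖ ^ 2 ≤ lB * ‖x‖ ^ 2 := by
      apply norm_toEL_le
      intro t ht
      exact hx (Sum.inr ⟨t, Finset.mem_filter.2 ⟨Finset.mem_univ _, ht⟩⟩)
    have hnormA : ‖Matrix.toEuclideanLin A (Matrix.toEuclideanLin B x)‖ ^ 2 ≤
        lA * ‖Matrix.toEuclideanLin B x‖ ^ 2 := by
      apply norm_toEL_le
      intro t ht
      have h6 := hx (Sum.inl ⟨t, Finset.mem_filter.2 ⟨Finset.mem_univ _, ht⟩⟩)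
      simpa [hφ] using h6
    have h5 : (inner ℂ x (Matrix.toEuclideanLin ((A * B)ᴴ * (A * B)) x) : ℂ).re =
        ‖Matrix.toEuclideanLin (A * B) x‖ ^ 2 := by
      rw [normsq_eq]
      exact Complex.ofReal_re _
    rw [h5, toEL_mul]
    calc ‖Matrix.toEuclideanLin A (Matrix.toEuclideanLin B x)‖ ^ 2
        ≤ lA * ‖Matrix.toEuclideanLin B x‖ ^ 2 := hnormA
    _ ≤ lA * (lB * ‖x‖ ^ 2) := mul_le_mul_of_nonneg_left hnormB hlA0
    _ = lA * lB * ‖x‖ ^ 2 := by ring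
  have hkey : kthLargest hAB.eigenvalues (i + j + 1) ≤ lA * lB :=
    key_cf hAB hcard φ (mul_nonneg hlA0 hlB0) hbound
  rw [sv, sv, sv, ← Real.sqrt_mul hlA0]
  exact Real.sqrt_le_sqrt hkey
end

section
/- Let N and H be p×p Hermitian matrices and M = N + H. If indices satisfy r + s − 1 ≤ i and i ≤ j + k − p, then λ_j(N) + λ_k(H) ≤ λ_i(M) ≤ λ_r(N) + λ_s(H), where λ_1 ≥ λ_2 ≥ ... ≥ λ_p denote eigenvalues in decreasing order. -/
open scoped BigOperators

namespace WeylAux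

open Finset Module

variable {p : ℕ}

lemma card_filter_perm (v : Fin p → ℝ) (σ : Equiv.Perm (Fin p)) (t : ℝ) :
    (univ.filter fun i => t ≤ v (σ i)).card = (univ.filter fun i => t ≤ v i).card :=
  Finset.card_equiv σ (by simp)

lemma kthLargest_isGreatest (v : Fin p → ℝ) (k : ℕ) (hk1 : 1 ≤ k) (hkp : k ≤ p) :
    IsGreatest {t : ℝ | k ≤ (Finset.univ.filter (fun i => t ≤ v i)).card}
      ((v ∘ Tuple.sort v) ⟨p - k, by omega⟩) := by
  set σ := Tuple.sort v with hσ
  set a : Fin p := ⟨p - k, by omega⟩ with ha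
  have hmono := Tuple.monotone_sort v
  constructor
  · show k ≤ _
    rw [← card_filter_perm v σ]
    have hsub : Finset.Ici a ⊆ univ.filter fun i => (v ∘ σ) a ≤ v (σ i) := by
      intro i hi
      simp only [Finset.mem_Ici] at hi
      simp only [Finset.mem_filter, Finset.mem_univ, true_and]
      exact hmono hi
    calc k = (Finset.Ici a).card := by rw [Fin.card_Ici]; simp [ha]; omega
    _ ≤ _ := Finset.card_le_card hsub
  · intro t ht
    by_contra hlt
    push_neg at hlt
    have hsub : (univ.filter fun i => t ≤ v (σ i)) ⊆ Finset.Ioi a := by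
      intro i hi
      simp only [Finset.mem_filter, Finset.mem_univ, true_and] at hi
      simp only [Finset.mem_Ioi]
      by_contra hle
      push_neg at hle
      exact absurd (le_trans hi (hmono hle)) (not_le.mpr hlt)
    have hcard := Finset.card_le_card hsub
    rw [Fin.card_Ioi] at hcard
    have ht' : k ≤ (univ.filter fun i => t ≤ v (σ i)).card := by
      rw [card_filter_perm]; exact ht
    simp only [ha] at hcard
    omega

lemma kthLargest_eq (v : Fin p → ℝ) (k : ℕ) (hk1 : 1 ≤ k) (hkp : k ≤ p) :
    kthLargest v k = (v ∘ Tuple.sort v) ⟨p - k, by omega⟩ :=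
  (kthLargest_isGreatest v k hk1 hkp).csSup_eq

variable {A : Matrix (Fin p) (Fin p) ℂ}

lemma repr_toEuclideanLin (hA : A.IsHermitian) (x : EuclideanSpace ℂ (Fin p)) (j : Fin p) :
    hA.eigenvectorBasis.repr (Matrix.toEuclideanLin A x) j
      = hA.eigenvalues j * hA.eigenvectorBasis.repr x j := by
  have hsym := Matrix.isHermitian_iff_isSymmetric.mp hA
  rw [OrthonormalBasis.repr_apply_apply, OrthonormalBasis.repr_apply_apply,
    ← hsym (hA.eigenvectorBasis j) x]
  have hev : Matrix.toEuclideanLin A (hA.eigenvectorBasis j)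
      = (hA.eigenvalues j : ℂ) • hA.eigenvectorBasis j := by
    apply_fun (WithLp.equiv 2 (Fin p → ℂ))
    simp only [Matrix.toEuclideanLin_apply]
    exact hA.mulVec_eigenvectorBasis j
  rw [hev, inner_smul_left, Complex.conj_ofReal]

lemma norm_sq_repr (b : OrthonormalBasis (Fin p) ℂ (EuclideanSpace ℂ (Fin p)))
    (x : EuclideanSpace ℂ (Fin p)) : ‖x‖ ^ 2 = ∑ j, ‖b.repr x j‖ ^ 2 := by
  rw [← b.repr.norm_map x, EuclideanSpace.norm_eq, Real.sq_sqrt (by positivity)]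

lemma rayleigh_eq (hA : A.IsHermitian) (x : EuclideanSpace ℂ (Fin p)) :
    Complex.re (inner ℂ x (Matrix.toEuclideanLin A x) : ℂ)
      = ∑ j, hA.eigenvalues j * ‖hA.eigenvectorBasis.repr x j‖ ^ 2 := by
  set b := hA.eigenvectorBasis
  have h1 : (inner ℂ x (Matrix.toEuclideanLin A x) : ℂ)
      = inner ℂ (b.repr x) (b.repr (Matrix.toEuclideanLin A x)) :=
    (b.repr.inner_map_map x _).symm
  rw [h1, PiLp.inner_apply]
  simp only [repr_toEuclideanLin hA, RCLike.inner_apply]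
  rw [Complex.re_sum]
  refine Finset.sum_congr rfl fun j _ => ?_
  set c : ℂ := b.repr x j
  rw [show b.repr (Matrix.toEuclideanLin A x) j = hA.eigenvalues j * c from
    repr_toEuclideanLin hA x j]
  have : ((hA.eigenvalues j : ℂ) * c) * (starRingEnd ℂ) c
      = (hA.eigenvalues j : ℂ) * ((‖c‖ : ℝ) ^ 2 : ℝ) := by
    rw [mul_assoc]
    congr 1
    simp [Complex.mul_conj, Complex.normSq_eq_norm_sq]
  rw [this, ← Complex.ofReal_mul, Complex.ofReal_re]

lemma repr_eq_zero_of_mem_span (b : OrthonormalBasis (Fin p) ℂ (EuclideanSpace ℂ (Fin p)))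
    (S : Finset (Fin p)) {x : EuclideanSpace ℂ (Fin p)}
    (hx : x ∈ Submodule.span ℂ (b '' ↑S)) {j : Fin p} (hj : j ∉ S) : b.repr x j = 0 := by
  rw [OrthonormalBasis.repr_apply_apply]
  induction hx using Submodule.span_induction with
  | mem y hy =>
    obtain ⟨t, ht, rfl⟩ := hy
    have hne : j ≠ t := fun h => hj (h ▸ ht)
    exact b.orthonormal.2 hne
  | zero => exact inner_zero_right _
  | add y z _ _ hy hz => rw [inner_add_right, hy, hz, add_zero]
  | smul c y _ hy => rw [inner_smul_right, hy, mul_zero]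

lemma finrank_span_image (b : OrthonormalBasis (Fin p) ℂ (EuclideanSpace ℂ (Fin p)))
    (S : Finset (Fin p)) :
    finrank ℂ (Submodule.span ℂ (b '' ↑S)) = S.card := by
  classical
  have hinj : Function.Injective b := b.orthonormal.linearIndependent.injective
  rw [← Finset.coe_image, finrank_span_finset_eq_card, Finset.card_image_of_injective _ hinj]
  have hli : LinearIndependent ℂ (fun i : S => b i) :=
    b.orthonormal.linearIndependent.comp _ Subtype.val_injective
  have hr : Set.range (fun i : S => b i) = ↑(S.image b) := by
    ext y; simp [Set.range_comp]
  have := hli.linearIndepOn_id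
  rwa [hr] at this

lemma exists_unit_triple (V₁ V₂ V₃ : Submodule ℂ (EuclideanSpace ℂ (Fin p)))
    (h : 2 * p + 1 ≤ finrank ℂ V₁ + finrank ℂ V₂ + finrank ℂ V₃) :
    ∃ x : EuclideanSpace ℂ (Fin p), x ∈ V₁ ∧ x ∈ V₂ ∧ x ∈ V₃ ∧ ‖x‖ = 1 := by
  have hE : finrank ℂ (EuclideanSpace ℂ (Fin p)) = p := finrank_euclideanSpace_fin
  have key : ∀ W W' : Submodule ℂ (EuclideanSpace ℂ (Fin p)),
      finrank ℂ W + finrank ℂ W' ≤ finrank ℂ (W ⊓ W' : Submodule ℂ _) + p := by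
    intro W W'
    have := Submodule.finrank_sup_add_finrank_inf_eq W W'
    have h2 : finrank ℂ (W ⊔ W' : Submodule ℂ _) ≤ p := by
      calc finrank ℂ (W ⊔ W' : Submodule ℂ _) ≤ finrank ℂ (EuclideanSpace ℂ (Fin p)) :=
            Submodule.finrank_le _
        _ = p := hE
    omega
  have h12 := key V₁ V₂
  have h123 := key (V₁ ⊓ V₂) V₃
  have hpos : 0 < finrank ℂ ((V₁ ⊓ V₂) ⊓ V₃ : Submodule ℂ _) := by omega
  rw [Module.finrank_pos_iff] at hpos
  obtain ⟨⟨y, hy⟩, hy0⟩ := exists_ne (0 : ((V₁ ⊓ V₂) ⊓ V₃ : Submodule ℂ _))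
  have hy0' : y ≠ 0 := by simpa [Subtype.ext_iff] using hy0
  obtain ⟨⟨hy1, hy2⟩, hy3⟩ := hy
  refine ⟨(‖y‖ : ℂ)⁻¹ • y, Submodule.smul_mem _ _ hy1, Submodule.smul_mem _ _ hy2,
    Submodule.smul_mem _ _ hy3, ?_⟩
  rw [norm_smul]
  simp [norm_ne_zero_iff.mpr hy0']

/-- Rayleigh bound on span of an eigenvector subset, lower bound version. -/
lemma quad_ge_of_mem (hA : A.IsHermitian) (S : Finset (Fin p)) (c : ℝ)
    (hc : ∀ t ∈ S, c ≤ hA.eigenvalues t) {x : EuclideanSpace ℂ (Fin p)}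
    (hx : x ∈ Submodule.span ℂ (hA.eigenvectorBasis '' ↑S)) (hn : ‖x‖ = 1) :
    c ≤ Complex.re (inner ℂ x (Matrix.toEuclideanLin A x) : ℂ) := by
  rw [rayleigh_eq hA]
  have h1 : (1 : ℝ) = ∑ j, ‖hA.eigenvectorBasis.repr x j‖ ^ 2 := by
    rw [← norm_sq_repr hA.eigenvectorBasis x, hn]; norm_num
  calc c = c * ∑ j, ‖hA.eigenvectorBasis.repr x j‖ ^ 2 := by rw [← h1]; ring
    _ ≤ ∑ j, hA.eigenvalues j * ‖hA.eigenvectorBasis.repr x j‖ ^ 2 := by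
        rw [Finset.mul_sum]
        refine Finset.sum_le_sum fun j _ => ?_
        by_cases hj : j ∈ S
        · exact mul_le_mul_of_nonneg_right (hc j hj) (by positivity)
        · rw [repr_eq_zero_of_mem_span hA.eigenvectorBasis S hx hj]; norm_num

/-- Rayleigh bound on span of an eigenvector subset, upper bound version. -/
lemma quad_le_of_mem (hA : A.IsHermitian) (S : Finset (Fin p)) (c : ℝ)
    (hc : ∀ t ∈ S, hA.eigenvalues t ≤ c) {x : EuclideanSpace ℂ (Fin p)}
    (hx : x ∈ Submodule.span ℂ (hA.eigenvectorBasis '' ↑S)) (hn : ‖x‖ = 1) :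
    Complex.re (inner ℂ x (Matrix.toEuclideanLin A x) : ℂ) ≤ c := by
  rw [rayleigh_eq hA]
  have h1 : (1 : ℝ) = ∑ j, ‖hA.eigenvectorBasis.repr x j‖ ^ 2 := by
    rw [← norm_sq_repr hA.eigenvectorBasis x, hn]; norm_num
  calc ∑ j, hA.eigenvalues j * ‖hA.eigenvectorBasis.repr x j‖ ^ 2
      ≤ ∑ j, c * ‖hA.eigenvectorBasis.repr x j‖ ^ 2 := by
        refine Finset.sum_le_sum fun j _ => ?_
        by_cases hj : j ∈ S
        · exact mul_le_mul_of_nonneg_right (hc j hj) (by positivity)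
        · rw [repr_eq_zero_of_mem_span hA.eigenvectorBasis S hx hj]; norm_num
    _ = c := by rw [← Finset.mul_sum, ← h1]; ring

lemma eigH_eq (hA : A.IsHermitian) (k : ℕ) :
    eigH A k = kthLargest hA.eigenvalues k := by
  rw [eigH, dif_pos hA]

/-- Top space: dimension `k`, quadratic form at least `eigH A k` on unit vectors. -/
lemma exists_top_space (hA : A.IsHermitian) (k : ℕ) (hk1 : 1 ≤ k) (hkp : k ≤ p) :
    ∃ V : Submodule ℂ (EuclideanSpace ℂ (Fin p)), finrank ℂ V = k ∧
      ∀ x ∈ V, ‖x‖ = 1 → eigH A k ≤ Complex.re (inner ℂ x (Matrix.toEuclideanLin A x) : ℂ) := by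
  set μ := hA.eigenvalues
  set σ := Tuple.sort μ
  set a : Fin p := ⟨p - k, by omega⟩ with ha
  set S : Finset (Fin p) := (Finset.Ici a).image σ with hS
  refine ⟨Submodule.span ℂ (hA.eigenvectorBasis '' ↑S), ?_, ?_⟩
  · rw [finrank_span_image, hS, Finset.card_image_of_injective _ σ.injective, Fin.card_Ici]
    simp [ha]; omega
  · intro x hx hn
    refine quad_ge_of_mem hA S _ ?_ hx hn
    intro t ht
    rw [hS, Finset.mem_image] at ht
    obtain ⟨i, hi, rfl⟩ := ht
    rw [Finset.mem_Ici] at hi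
    rw [eigH_eq hA, kthLargest_eq μ k hk1 hkp]
    exact Tuple.monotone_sort μ hi

/-- Bottom space: dimension `p + 1 - k`, quadratic form at most `eigH A k` on unit vectors. -/
lemma exists_bot_space (hA : A.IsHermitian) (k : ℕ) (hk1 : 1 ≤ k) (hkp : k ≤ p) :
    ∃ V : Submodule ℂ (EuclideanSpace ℂ (Fin p)), finrank ℂ V = p + 1 - k ∧
      ∀ x ∈ V, ‖x‖ = 1 → Complex.re (inner ℂ x (Matrix.toEuclideanLin A x) : ℂ) ≤ eigH A k := by
  set μ := hA.eigenvalues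
  set σ := Tuple.sort μ
  set a : Fin p := ⟨p - k, by omega⟩ with ha
  set S : Finset (Fin p) := (Finset.Iic a).image σ with hS
  refine ⟨Submodule.span ℂ (hA.eigenvectorBasis '' ↑S), ?_, ?_⟩
  · rw [finrank_span_image, hS, Finset.card_image_of_injective _ σ.injective, Fin.card_Iic]
    simp [ha]; omega
  · intro x hx hn
    refine quad_le_of_mem hA S _ ?_ hx hn
    intro t ht
    rw [hS, Finset.mem_image] at ht
    obtain ⟨i, hi, rfl⟩ := ht
    rw [Finset.mem_Iic] at hi
    rw [eigH_eq hA, kthLargest_eq μ k hk1 hkp]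
    exact Tuple.monotone_sort μ hi

end WeylAux

open WeylAux Module in
/-- Weyl's inequalities. Indices are 1-based; the conditions `r+s−1 ≤ i` and
`i ≤ j+k−p` are stated subtraction-free as `r+s ≤ i+1` and `i+p ≤ j+k`. -/
theorem stmt5 {p : ℕ} (N H : Matrix (Fin p) (Fin p) ℂ)
    (hN : N.IsHermitian) (hH : H.IsHermitian)
    (i j k r s : ℕ) (hi : 1 ≤ i) (hip : i ≤ p) (hj : 1 ≤ j) (hjp : j ≤ p)
    (hk : 1 ≤ k) (hkp : k ≤ p) (hr : 1 ≤ r) (hrp : r ≤ p) (hs : 1 ≤ s) (hsp : s ≤ p)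
    (hrs : r + s ≤ i + 1) (hjk : i + p ≤ j + k) :
    eigH N j + eigH H k ≤ eigH (N + H) i ∧ eigH (N + H) i ≤ eigH N r + eigH H s := by
  have hM : (N + H).IsHermitian := hN.add hH
  have hsplit : ∀ x : EuclideanSpace ℂ (Fin p),
      Complex.re (inner ℂ x (Matrix.toEuclideanLin (N + H) x) : ℂ)
        = Complex.re (inner ℂ x (Matrix.toEuclideanLin N x) : ℂ)
          + Complex.re (inner ℂ x (Matrix.toEuclideanLin H x) : ℂ) := by
    intro x
    rw [map_add, LinearMap.add_apply, inner_add_right, Complex.add_re]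
  constructor
  · -- lower bound
    obtain ⟨V₁, hd₁, hb₁⟩ := exists_bot_space hM i hi hip
    obtain ⟨V₂, hd₂, hb₂⟩ := exists_top_space hN j hj hjp
    obtain ⟨V₃, hd₃, hb₃⟩ := exists_top_space hH k hk hkp
    obtain ⟨x, hx₁, hx₂, hx₃, hxn⟩ := exists_unit_triple V₁ V₂ V₃ (by omega)
    calc eigH N j + eigH H k
        ≤ Complex.re (inner ℂ x (Matrix.toEuclideanLin N x) : ℂ)
            + Complex.re (inner ℂ x (Matrix.toEuclideanLin H x) : ℂ) :=
          add_le_add (hb₂ x hx₂ hxn) (hb₃ x hx₃ hxn)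
      _ = Complex.re (inner ℂ x (Matrix.toEuclideanLin (N + H) x) : ℂ) := (hsplit x).symm
      _ ≤ eigH (N + H) i := hb₁ x hx₁ hxn
  · -- upper bound
    obtain ⟨V₁, hd₁, hb₁⟩ := exists_top_space hM i hi hip
    obtain ⟨V₂, hd₂, hb₂⟩ := exists_bot_space hN r hr hrp
    obtain ⟨V₃, hd₃, hb₃⟩ := exists_bot_space hH s hs hsp
    obtain ⟨x, hx₁, hx₂, hx₃, hxn⟩ := exists_unit_triple V₁ V₂ V₃ (by omega)
    calc eigH (N + H) i
        ≤ Complex.re (inner ℂ x (Matrix.toEuclideanLin (N + H) x) : ℂ) := hb₁ x hx₁ hxn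
      _ = Complex.re (inner ℂ x (Matrix.toEuclideanLin N x) : ℂ)
            + Complex.re (inner ℂ x (Matrix.toEuclideanLin H x) : ℂ) := hsplit x
      _ ≤ eigH N r + eigH H s := add_le_add (hb₂ x hx₂ hxn) (hb₃ x hx₃ hxn)
end

section
/- Let (λ_1^{(p)} ≥ λ_2^{(p)} ≥ ... ≥ λ_p^{(p)}) be the eigenvalues of a p×p sample correlation matrix, and suppose: (i) for each k ≤ r, liminf_{p→∞} λ_k^{(p)} / log p > 1, and (ii) limsup_{p→∞} λ_{r+1}^{(p)} < ∞. Define BS(p) as the largest m such that λ_i^{(p)} > Σ_{j=i}^p 1/j for all i = 1,...,m (and 0 if λ_1^{(p)} ≤ Σ_{j=1}^p 1/j). Then BS(p) = r for all sufficiently large p. -/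
open scoped BigOperators
open Matrix

open Filter

/-- The broken-stick rule: the largest `m ≤ p` such that the `i`-th largest eigenvalue exceeds
the tail harmonic sum `Σ_{j=i}^p 1/j` for all `i = 1,…,m` (and `0` if already `λ_1` fails). -/
noncomputable def brokenStick (lam : ℕ → ℝ) (p : ℕ) : ℕ :=
  sSup {m : ℕ | m ≤ p ∧ ∀ i, 1 ≤ i → i ≤ m → (∑ j ∈ Finset.Icc i p, (1 : ℝ) / j) < lam i}

lemma aux_sum_Icc_one (p : ℕ) : ∑ j ∈ Finset.Icc 1 p, (1:ℝ)/j = (harmonic p : ℝ) := by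
  rw [harmonic_eq_sum_Icc]; push_cast; simp [one_div]

lemma aux_sum_tail (r p : ℕ) (h : r ≤ p) :
    ∑ j ∈ Finset.Icc (r+1) p, (1:ℝ)/j = (harmonic p : ℝ) - (harmonic r : ℝ) := by
  have key := Finset.sum_Ioc_consecutive (fun j : ℕ => (1:ℝ)/j) (Nat.zero_le r) h
  rw [harmonic_eq_sum_Icc, harmonic_eq_sum_Icc]
  push_cast
  simp only [one_div, ← Finset.Icc_add_one_left_eq_Ioc, Nat.succ_eq_add_one, Nat.zero_add] at key ⊢
  linarith

lemma aux_liminf (f : ℕ → ℝ) (h : 1 < Filter.liminf f atTop) :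
    ∃ a : ℝ, 1 < a ∧ ∀ᶠ p in atTop, a ≤ f p := by
  rw [liminf_eq] at h
  have hne : {a : ℝ | ∀ᶠ p in atTop, a ≤ f p}.Nonempty := by
    by_contra hc
    rw [Set.not_nonempty_iff_eq_empty] at hc
    rw [hc, Real.sSup_empty] at h
    linarith
  obtain ⟨a, ha, h1a⟩ := exists_lt_of_lt_csSup hne h
  exact ⟨a, h1a, ha⟩

/-- deterministic core of the broken-stick rule theorem: if the first `r`
eigenvalues grow faster than `log p` (liminf of ratio `> 1`) and the `(r+1)`-st stays bounded,
then the broken-stick rule equals `r` for all large `p`. -/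
theorem stmt14 (lam : ℕ → ℕ → ℝ) (r : ℕ)
    (hdec : ∀ p i j, 1 ≤ i → i ≤ j → lam p j ≤ lam p i)
    (hgrow : ∀ k, 1 ≤ k → k ≤ r →
      1 < Filter.liminf (fun p : ℕ => lam p k / Real.log p) atTop)
    (hbdd : ∃ M : ℝ, ∀ᶠ p : ℕ in atTop, lam p (r + 1) ≤ M) :
    ∀ᶠ p : ℕ in atTop, brokenStick (lam p) p = r := by
  obtain ⟨M, hM⟩ := hbdd
  have hlog : Tendsto (fun p : ℕ => Real.log p) atTop atTop :=
    Real.tendsto_log_atTop.comp tendsto_natCast_atTop_atTop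
  -- eventual growth of lam p r beyond 1 + log p, when r ≥ 1
  have hEgrow : ∀ᶠ p : ℕ in atTop, 1 ≤ r → 1 + Real.log p < lam p r := by
    rcases Nat.eq_zero_or_pos r with hr | hr
    · filter_upwards with p h; omega
    · obtain ⟨a, h1a, ha⟩ := aux_liminf _ (hgrow r hr le_rfl)
      have h3 : ∀ᶠ p : ℕ in atTop, 1/(a-1) < Real.log p :=
        hlog.eventually (eventually_gt_atTop _)
      have h4 : ∀ᶠ p : ℕ in atTop, (0:ℝ) < Real.log p :=
        hlog.eventually (eventually_gt_atTop _)
      filter_upwards [ha, h3, h4] with p ha h3 h4 _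
      have hl : a * Real.log p ≤ lam p r := (le_div_iff₀ h4).mp ha
      have : 1 < (a-1) * Real.log p := by
        rw [div_lt_iff₀ (by linarith)] at h3; linarith
      nlinarith
  -- eventual failure at r+1
  have hEfail : ∀ᶠ p : ℕ in atTop, M + (harmonic r : ℝ) < Real.log (p+1) := by
    have : Tendsto (fun p : ℕ => Real.log ((p:ℝ)+1)) atTop atTop :=
      Real.tendsto_log_atTop.comp (tendsto_atTop_add_const_right _ _ tendsto_natCast_atTop_atTop)
    exact this.eventually (eventually_gt_atTop _)
  filter_upwards [hM, hEgrow, hEfail, eventually_ge_atTop r] with p hM hEgrow hEfail hrp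
  have hrmem : r ∈ {m : ℕ | m ≤ p ∧ ∀ i, 1 ≤ i → i ≤ m →
      (∑ j ∈ Finset.Icc i p, (1 : ℝ) / j) < lam p i} := by
    refine ⟨hrp, fun i h1i hir => ?_⟩
    have hsub : ∑ j ∈ Finset.Icc i p, (1:ℝ)/j ≤ ∑ j ∈ Finset.Icc 1 p, (1:ℝ)/j := by
      apply Finset.sum_le_sum_of_subset_of_nonneg
      · exact Finset.Icc_subset_Icc_left h1i
      · intro j _ _; positivity
    have h1 : (harmonic p : ℝ) ≤ 1 + Real.log p := harmonic_le_one_add_log p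
    have h2 : lam p r ≤ lam p i := hdec p i r h1i hir
    have := hEgrow (le_trans h1i hir)
    rw [aux_sum_Icc_one] at hsub
    linarith
  have hub : ∀ m ∈ {m : ℕ | m ≤ p ∧ ∀ i, 1 ≤ i → i ≤ m →
      (∑ j ∈ Finset.Icc i p, (1 : ℝ) / j) < lam p i}, m ≤ r := by
    rintro m ⟨hmp, hm⟩
    by_contra hc
    push_neg at hc
    have := hm (r+1) (by omega) (by omega)
    rw [aux_sum_tail r p hrp] at this
    have hlow : Real.log ((p:ℝ)+1) ≤ (harmonic p : ℝ) := by
      have := log_add_one_le_harmonic p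
      push_cast at this
      exact this
    linarith
  rw [brokenStick]
  exact le_antisymm (csSup_le ⟨r, hrmem⟩ hub)
    (le_csSup ⟨p, fun m hm => hm.1⟩ hrmem)
end
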